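/- If f : X → X is (m,n)-expansive then f is (m+1,n)-expansive, and if f is (m,n)-expansive with m > n ≥ 2 then f is (m-1,n-1)-expansive. -/

import Mathlib

variable {X : Type*} [MetricSpace X]

/-- The `k`-th iterate (`k ∈ ℤ`) of a homeomorphism, as a function. -/
noncomputable def hiter (f : X ≃ₜ X) (k : ℤ) : X → X := ⇑(f.toEquiv ^ k)

/-- A set is `δ`-separated if distinct points are at distance `> δ`. -/
def IsSeparated' (δ : ℝ) (B : Set X) : Prop :=
  ∀ x ∈ B, ∀ y ∈ B, x ≠ y → δ < dist x y

/-- The `δ`-cardinality of a set: sup of cardinalities of `δ`-separated subsets. -/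
noncomputable def dCard (δ : ℝ) (A : Set X) : ℕ∞ :=
  ⨆ B ∈ {B : Set X | B ⊆ A ∧ IsSeparated' δ B}, B.encard

/-- `(m,n)`-expansiveness with a given expansive constant `δ`. -/
def MNExpansiveWith (f : X ≃ₜ X) (m n : ℕ) (δ : ℝ) : Prop :=
  ∀ A : Set X, A.encard = m → ∃ k : ℤ, (n : ℕ∞) < dCard δ (hiter f k '' A)

/-- `(m,n)`-expansiveness. -/
def MNExpansive (f : X ≃ₜ X) (m n : ℕ) : Prop :=
  ∃ δ > 0, MNExpansiveWith f m n δ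

lemma le_dCard {δ : ℝ} {A B : Set X} (hBA : B ⊆ A) (hB : IsSeparated' δ B) :
    B.encard ≤ dCard δ A := by
  rw [dCard]
  exact le_iSup₂_of_le B (⟨hBA, hB⟩ : B ∈ {B : Set X | B ⊆ A ∧ IsSeparated' δ B}) le_rfl

lemma lt_dCard_iff {δ : ℝ} {A : Set X} {c : ℕ∞} :
    c < dCard δ A ↔ ∃ B, B ⊆ A ∧ IsSeparated' δ B ∧ c < B.encard := by
  constructor
  · intro h
    rw [dCard, lt_iSup_iff] at h
    obtain ⟨B, hB⟩ := h
    rw [lt_iSup_iff] at hB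
    obtain ⟨⟨h1, h2⟩, h3⟩ := hB
    exact ⟨B, h1, h2, h3⟩
  · rintro ⟨B, h1, h2, h3⟩
    exact lt_of_lt_of_le h3 (le_dCard h1 h2)

lemma dCard_mono {δ : ℝ} {A A' : Set X} (h : A ⊆ A') : dCard δ A ≤ dCard δ A' := by
  apply iSup₂_le
  rintro B ⟨h1, h2⟩
  exact le_dCard (h1.trans h) h2

lemma hiter_injective (f : X ≃ₜ X) (k : ℤ) : Function.Injective (hiter f k) :=
  (f.toEquiv ^ k).injective

theorem stmt3 [CompactSpace X] (f : X ≃ₜ X) (m n : ℕ) :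
    (MNExpansive f m n → MNExpansive f (m + 1) n) ∧
    (n < m → 2 ≤ n → MNExpansive f m n → MNExpansive f (m - 1) (n - 1)) := by
  constructor
  · rintro ⟨δ, hδ, hexp⟩
    refine ⟨δ, hδ, fun A hA => ?_⟩
    obtain ⟨A', hA'sub, hA'⟩ := Set.exists_subset_encard_eq
      (show (m : ℕ∞) ≤ A.encard by rw [hA]; exact_mod_cast Nat.le_succ m)
    obtain ⟨k, hk⟩ := hexp A' hA'
    exact ⟨k, lt_of_lt_of_le hk (dCard_mono (Set.image_mono hA'sub))⟩
  · rintro hnm hn2 ⟨δ, hδ, hexp⟩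
    by_cases hfin : (Set.univ : Set X).encard = ((m - 1 : ℕ) : ℕ∞)
    · -- X is finite with exactly m-1 points; every set of size m-1 is all of X
      have hXfin : Finite X := by
        rw [← Set.finite_univ_iff]
        exact Set.finite_of_encard_eq_coe hfin
      have hε : ∃ ε > (0:ℝ), ∀ x y : X, x ≠ y → ε < dist x y := by
        set D : Set ℝ := Set.range (fun p : {p : X × X // p.1 ≠ p.2} => dist p.1.1 p.1.2) with hD
        have hDfin : D.Finite := Set.finite_range _
        rcases D.eq_empty_or_nonempty with hne | hne
        · refine ⟨1, one_pos, fun x y hxy => ?_⟩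
          have hmem : dist x y ∈ D := ⟨⟨(x, y), hxy⟩, rfl⟩
          rw [hne] at hmem
          exact absurd hmem (Set.notMem_empty _)
        · obtain ⟨d, hd, hmin⟩ := Set.exists_min_image D id hDfin hne
          obtain ⟨⟨⟨x, y⟩, hxy⟩, rfl⟩ := hd
          have hpos : (0:ℝ) < dist x y := dist_pos.mpr hxy
          refine ⟨dist x y / 2, by linarith, fun a b hab => ?_⟩
          have : dist x y ≤ dist a b := hmin _ ⟨⟨(a, b), hab⟩, rfl⟩
          linarith
      obtain ⟨ε, hε, hsep⟩ := hε
      refine ⟨ε, hε, fun A hA => ⟨0, lt_dCard_iff.mpr ⟨hiter f 0 '' A, subset_rfl,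
        fun x _ y _ hxy => hsep x y hxy, ?_⟩⟩⟩
      rw [(hiter_injective f 0).encard_image A, hA]
      exact_mod_cast Nat.sub_lt_sub_right (by omega) hnm
    · refine ⟨δ, hδ, fun A hA => ?_⟩
      have hAne : A ≠ Set.univ := fun h => hfin (h ▸ hA)
      obtain ⟨p, hp⟩ : ∃ p, p ∉ A := by
        by_contra h
        push_neg at h
        exact hAne (Set.eq_univ_of_forall h)
      obtain ⟨k, hk⟩ := hexp (insert p A) (by
        rw [Set.encard_insert_of_notMem hp, hA]
        rw [show ((m - 1 : ℕ) : ℕ∞) + 1 = ((m - 1 + 1 : ℕ) : ℕ∞) by push_cast; ring]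
        congr 1
        omega)
      obtain ⟨B, hBsub, hBsep, hBcard⟩ := lt_dCard_iff.mp hk
      refine ⟨k, lt_dCard_iff.mpr ⟨B \ {hiter f k p}, ?_, ?_, ?_⟩⟩
      · intro x hx
        have := hBsub hx.1
        rw [Set.image_insert_eq] at this
        rcases this with h | h
        · exact absurd h hx.2
        · exact h
      · exact fun x hx y hy hxy => hBsep x hx.1 y hy.1 hxy
      · have h1 : (n : ℕ∞) + 1 ≤ B.encard :=
          (ENat.add_one_le_iff (by exact_mod_cast ENat.coe_ne_top n)).mpr hBcard
        have h2 : B.encard ≤ (B \ {hiter f k p}).encard + 1 := by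
          calc B.encard ≤ (insert (hiter f k p) (B \ {hiter f k p})).encard := by
                apply Set.encard_mono
                intro x hx
                by_cases hxp : x = hiter f k p
                · exact Or.inl hxp
                · exact Or.inr ⟨hx, hxp⟩
            _ ≤ (B \ {hiter f k p}).encard + 1 := Set.encard_insert_le _ _
        have h3 : (n : ℕ∞) ≤ (B \ {hiter f k p}).encard := by
          have := h1.trans h2
          exact (WithTop.add_le_add_iff_right (by simp : (1:ℕ∞) ≠ ⊤)).mp this
        calc ((n - 1 : ℕ) : ℕ∞) < (n : ℕ∞) := by exact_mod_cast Nat.sub_lt (by omega) one_pos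
          _ ≤ _ := h3
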